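/- Let G be a connected graph, and let k, L be reals with 0 < k < L. Let c be a nonnegative vertex weight function with total weight N such that every vertex has weight at least k, some vertex has weight at least L, and N − L is an integer multiple of k. If v is a c-median vertex of G and L ≤ N/2, then σ_c(v,G) ≤ (N² − 2L²)/(4k) + (N+L)/2. -/

import Mathlib

open Finset
open scoped Classical

namespace WMBAux

variable {V : Type*} [Fintype V] {G : SimpleGraph V}

/-- First step of a geodesic: a neighbor of `v` that is one closer to `x`. -/
lemma dist_step (hG : G.Connected) {v x : V} (h : 0 < G.dist v x) :
    ∃ q, G.Adj v q ∧ G.dist q x + 1 = G.dist v x := by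
  obtain ⟨p, hp⟩ := hG.exists_walk_length_eq_dist v x
  cases p with
  | nil => simp at hp; rw [SimpleGraph.dist_self] at h; omega
  | @cons _ b _ hadj p' =>
    refine ⟨b, hadj, ?_⟩
    have h1 : G.dist b x ≤ p'.length := SimpleGraph.dist_le p'
    have h2 : G.dist v x ≤ G.dist v b + G.dist b x := hG.dist_triangle
    have h3 : G.dist v b = 1 := SimpleGraph.dist_eq_one_iff_adj.mpr hadj
    simp only [SimpleGraph.Walk.length_cons] at hp
    omega

/-- A vertex at prescribed distances along a geodesic. -/
lemma dist_mid (hG : G.Connected) :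
    ∀ (s t : ℕ) (u w : V), s + t = G.dist u w →
      ∃ y, G.dist u y = s ∧ G.dist y w = t := by
  intro s
  induction s with
  | zero =>
    intro t u w h
    exact ⟨u, by simp [SimpleGraph.dist_self], by omega⟩
  | succ s ih =>
    intro t u w h
    have h0 : 0 < G.dist u w := by omega
    obtain ⟨q, hadj, hq⟩ := dist_step hG h0
    obtain ⟨y, hy1, hy2⟩ := ih t q w (by omega)
    refine ⟨y, ?_, hy2⟩
    have h1 : G.dist u y ≤ G.dist u q + G.dist q y := hG.dist_triangle
    have h2 : G.dist u w ≤ G.dist u y + G.dist y w := hG.dist_triangle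
    have h3 : G.dist u q = 1 := SimpleGraph.dist_eq_one_iff_adj.mpr hadj
    omega

/-- One-dimensional level-counting bound for a branch `B` that is level-closed
from its root `q`, has all weights `≥ k` and contains a vertex of weight `≥ Λ`. -/
lemma part_bound (c : V → ℝ) (k Λ : ℝ) (hk : 0 < k)
    (hck : ∀ u, k ≤ c u) (hkΛ : k ≤ Λ) (q : V) (B : Finset V) (hqB : q ∈ B)
    (hz : ∃ z ∈ B, Λ ≤ c z)
    (hclosed : ∀ w ∈ B, ∀ s : ℕ, s ≤ G.dist q w → ∃ y ∈ B, G.dist q y = s) :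
    ∑ w ∈ B, c w * (G.dist q w : ℝ) ≤
      ((∑ w ∈ B, c w) ^ 2 - Λ ^ 2) / (2 * k) - ((∑ w ∈ B, c w) - Λ) / 2 := by
  classical
  have hc0 : ∀ u, 0 ≤ c u := fun u => le_trans hk.le (hck u)
  have hBne : B.Nonempty := ⟨q, hqB⟩
  obtain ⟨wT, hwT, hTdef⟩ := Finset.exists_mem_eq_sup B hBne (fun w => G.dist q w)
  set T : ℕ := B.sup (fun w => G.dist q w) with hT
  have hle : ∀ w ∈ B, G.dist q w ≤ T := fun w hw => Finset.le_sup hw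
  set W : ℝ := ∑ w ∈ B, c w with hW
  -- levels
  set A : ℕ → ℝ := fun s => ∑ w ∈ B.filter (fun w => G.dist q w = s), c w with hA
  have hmaps : ∀ w ∈ B, G.dist q w ∈ Finset.range (T + 1) := by
    intro w hw; exact Finset.mem_range.mpr (Nat.lt_succ_of_le (hle w hw))
  have hWsum : ∑ s ∈ Finset.range (T + 1), A s = W := by
    exact Finset.sum_fiberwise_of_maps_to hmaps c
  have hlevel : ∀ s ∈ Finset.range (T + 1), ∃ y ∈ B, G.dist q y = s := by
    intro s hs
    exact hclosed wT hwT s (by have := Finset.mem_range.mp hs; omega)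
  have hAk : ∀ s ∈ Finset.range (T + 1), k ≤ A s := by
    intro s hs
    obtain ⟨y, hyB, hys⟩ := hlevel s hs
    have hymem : y ∈ B.filter (fun w => G.dist q w = s) := Finset.mem_filter.mpr ⟨hyB, hys⟩
    calc k ≤ c y := hck y
    _ ≤ A s := Finset.single_le_sum (fun i _ => hc0 i) hymem
  -- total weight lower bound
  obtain ⟨z, hzB, hzΛ⟩ := hz
  have hz0 : G.dist q z ∈ Finset.range (T + 1) := hmaps z hzB
  have hAz : Λ ≤ A (G.dist q z) := by
    have hzmem : z ∈ B.filter (fun w => G.dist q w = G.dist q z) :=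
      Finset.mem_filter.mpr ⟨hzB, rfl⟩
    calc Λ ≤ c z := hzΛ
    _ ≤ A (G.dist q z) := Finset.single_le_sum (fun i _ => hc0 i) hzmem
  have hTW : k * T + Λ ≤ W := by
    have h1 : ∑ s ∈ (Finset.range (T + 1)).erase (G.dist q z), A s + A (G.dist q z)
        = ∑ s ∈ Finset.range (T + 1), A s := Finset.sum_erase_add _ _ hz0
    have h2 : (T : ℝ) * k ≤ ∑ s ∈ (Finset.range (T + 1)).erase (G.dist q z), A s := by
      have hcard : ((Finset.range (T + 1)).erase (G.dist q z)).card = T := by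
        rw [Finset.card_erase_of_mem hz0, Finset.card_range]
        omega
      calc (T : ℝ) * k = ∑ _s ∈ (Finset.range (T + 1)).erase (G.dist q z), k := by
            rw [Finset.sum_const, hcard, nsmul_eq_mul]
      _ ≤ _ := Finset.sum_le_sum (fun s hs => hAk s (Finset.mem_of_mem_erase hs))
    nlinarith [hWsum]
  -- the weighted distance sum as a sum over levels
  have hdsum : ∑ w ∈ B, c w * (G.dist q w : ℝ)
      = ∑ s ∈ Finset.range (T + 1), (s : ℝ) * A s := by
    rw [← Finset.sum_fiberwise_of_maps_to hmaps (fun w => c w * (G.dist q w : ℝ))]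
    refine Finset.sum_congr rfl (fun s _ => ?_)
    rw [Finset.mul_sum]
    refine Finset.sum_congr rfl (fun w hw => ?_)
    have := (Finset.mem_filter.mp hw).2
    rw [this, mul_comm]
  -- Abel-type bound
  have hgauss : ∑ s ∈ Finset.range (T + 1), (s : ℝ) = T * (T + 1) / 2 := by
    induction T with
    | zero => simp
    | succ n ihn => rw [Finset.sum_range_succ, ihn]; push_cast; ring
  have habel : ∑ s ∈ Finset.range (T + 1), (s : ℝ) * A s
      ≤ (T : ℝ) * W - k * (T * (T + 1) / 2) := by
    have key : ∀ s ∈ Finset.range (T + 1),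
        (s : ℝ) * A s ≤ (T : ℝ) * A s - ((T : ℝ) - s) * k := by
      intro s hs
      have hsT : (s : ℝ) ≤ T := by
        have := Finset.mem_range.mp hs; exact_mod_cast Nat.lt_succ_iff.mp this
      have := hAk s hs
      nlinarith
    calc ∑ s ∈ Finset.range (T + 1), (s : ℝ) * A s
        ≤ ∑ s ∈ Finset.range (T + 1), ((T : ℝ) * A s - ((T : ℝ) - s) * k) :=
          Finset.sum_le_sum key
    _ = (T : ℝ) * (∑ s ∈ Finset.range (T + 1), A s)
        - (∑ s ∈ Finset.range (T + 1), ((T : ℝ) - (s : ℝ))) * k := by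
          rw [Finset.sum_sub_distrib, ← Finset.mul_sum, ← Finset.sum_mul]
    _ = (T : ℝ) * W - k * (T * (T + 1) / 2) := by
          have hsum2 : ∑ s ∈ Finset.range (T + 1), ((T : ℝ) - (s : ℝ))
              = (T : ℝ) * (T + 1) / 2 := by
            rw [Finset.sum_sub_distrib, Finset.sum_const, Finset.card_range, hgauss,
              nsmul_eq_mul]
            push_cast; ring
          rw [hWsum, hsum2]; ring
  rw [hdsum]
  have hT0 : (0 : ℝ) ≤ T := Nat.cast_nonneg T
  have hu : 0 ≤ W - Λ - k * T := by linarith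
  calc ∑ s ∈ Finset.range (T + 1), (s : ℝ) * A s
      ≤ (T : ℝ) * W - k * (T * (T + 1) / 2) := habel
  _ ≤ (W ^ 2 - Λ ^ 2) / (2 * k) - (W - Λ) / 2 := by
      rw [← sub_nonneg]
      have expand : (W ^ 2 - Λ ^ 2) / (2 * k) - (W - Λ) / 2
          - ((T : ℝ) * W - k * (T * (T + 1) / 2))
          = ((W - Λ - k * T) * ((W - Λ - k * T) + 2 * Λ - k)) / (2 * k) := by
        field_simp
        ring
      rw [expand]
      have hnum : 0 ≤ (W - Λ - k * ↑T) * ((W - Λ - k * ↑T) + 2 * Λ - k) :=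
        mul_nonneg hu (by linarith)
      exact div_nonneg hnum (by linarith)

/-- Main induction: peel off branches from the remaining set `R`. -/
lemma main_ind (hG : G.Connected) (c : V → ℝ) (k L N : ℝ) (hk : 0 < k) (hkL : k < L)
    (hck : ∀ u, k ≤ c u) (hN : N = ∑ u, c u)
    (v u₀ : V) (hu₀ : L ≤ c u₀)
    (hmed : ∀ u : V, (∑ w, c w * (G.dist v w : ℝ)) ≤ ∑ w, c w * (G.dist u w : ℝ)) :
    ∀ R : Finset V, v ∈ R →
      (∀ y, y ∉ R → ∃ q, G.Adj v q ∧ (∀ z ∈ R, G.dist v z ≤ G.dist q z) ∧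
          G.dist q y < G.dist v y) →
      ∑ w ∈ R, c w * (G.dist v w : ℝ) ≤
        ((∑ w ∈ R, c w) - c v) * (N / (4 * k) + 1 / 2)
          - (if u₀ ∈ R ∧ u₀ ≠ v then L ^ 2 / (2 * k) - L / 2 else 0) := by
  classical
  have hc0 : ∀ u, 0 ≤ c u := fun u => le_trans hk.le (hck u)
  intro R
  induction R using Finset.strongInduction with
  | _ R ih =>
    intro hvR hI
    by_cases hx : ∃ x ∈ R, 0 < G.dist v x
    · obtain ⟨x, hxR, hxd⟩ := hx
      obtain ⟨q, hadj, hqx⟩ := dist_step hG hxd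
      have hvq1 : G.dist v q = 1 := SimpleGraph.dist_eq_one_iff_adj.mpr hadj
      have hqv1 : G.dist q v = 1 := SimpleGraph.dist_eq_one_iff_adj.mpr hadj.symm
      -- q ∈ R
      have hqR : q ∈ R := by
        by_contra hqR
        obtain ⟨q', _, hq'z, hq'y⟩ := hI q hqR
        have : G.dist q' q = 0 := by omega
        have hq'q : q' = q := (hG.dist_eq_zero_iff).mp this
        have := hq'z x hxR
        rw [hq'q] at this
        omega
      set B : Finset V := R.filter (fun w => G.dist q w < G.dist v w) with hBdef
      have hBR : B ⊆ R := Finset.filter_subset _ _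
      have hqB : q ∈ B := by
        refine Finset.mem_filter.mpr ⟨hqR, ?_⟩
        rw [SimpleGraph.dist_self, hvq1]; omega
      have hvB : v ∉ B := by
        intro hvB
        have := (Finset.mem_filter.mp hvB).2
        rw [SimpleGraph.dist_self, hqv1] at this
        omega
      have hBd : ∀ w ∈ B, G.dist v w = G.dist q w + 1 := by
        intro w hw
        have h1 := (Finset.mem_filter.mp hw).2
        have h2 : G.dist v w ≤ G.dist v q + G.dist q w := hG.dist_triangle
        omega
      -- median: weight of the q-side is at most N/2
      set X : ℝ := ∑ w ∈ Finset.univ.filter (fun w => G.dist q w < G.dist v w), c w with hXdef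
      have hX2 : 2 * X ≤ N := by
        have hm := hmed q
        have hqbound : ∑ w, c w * (G.dist q w : ℝ)
            ≤ ∑ w, c w * (G.dist v w : ℝ) + (N - 2 * X) := by
          have hsplitq := Finset.sum_filter_add_sum_filter_not Finset.univ
            (fun w => G.dist q w < G.dist v w) (fun w => c w * (G.dist q w : ℝ))
          have hsplitv := Finset.sum_filter_add_sum_filter_not Finset.univ
            (fun w => G.dist q w < G.dist v w) (fun w => c w * (G.dist v w : ℝ))
          have hsplitc := Finset.sum_filter_add_sum_filter_not Finset.univ
            (fun w => G.dist q w < G.dist v w) c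
          have h1 : ∑ w ∈ Finset.univ.filter (fun w => G.dist q w < G.dist v w),
              c w * (G.dist q w : ℝ)
              = ∑ w ∈ Finset.univ.filter (fun w => G.dist q w < G.dist v w),
                (c w * (G.dist v w : ℝ) - c w) := by
            refine Finset.sum_congr rfl (fun w hw => ?_)
            have hcond := (Finset.mem_filter.mp hw).2
            have h2 : G.dist v w ≤ G.dist v q + G.dist q w := hG.dist_triangle
            have heq : G.dist v w = G.dist q w + 1 := by omega
            rw [heq]; push_cast; ring
          have h2 : ∑ w ∈ Finset.univ.filter (fun w => ¬ G.dist q w < G.dist v w),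
              c w * (G.dist q w : ℝ)
              ≤ ∑ w ∈ Finset.univ.filter (fun w => ¬ G.dist q w < G.dist v w),
                (c w * (G.dist v w : ℝ) + c w) := by
            refine Finset.sum_le_sum (fun w hw => ?_)
            have h3 : G.dist q w ≤ G.dist q v + G.dist v w := hG.dist_triangle
            have h4 : (G.dist q w : ℝ) ≤ (G.dist v w : ℝ) + 1 := by
              rw [hqv1] at h3; exact_mod_cast by omega
            nlinarith [hc0 w]
          rw [Finset.sum_sub_distrib] at h1
          rw [Finset.sum_add_distrib] at h2
          have hNc : (∑ w ∈ Finset.univ.filter (fun w => G.dist q w < G.dist v w), c w)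
              + ∑ w ∈ Finset.univ.filter (fun w => ¬ G.dist q w < G.dist v w), c w = N := by
            rw [hsplitc, hN]
          rw [← hsplitq, ← hsplitv, ← hXdef] at *
          linarith
        linarith
      set W : ℝ := ∑ w ∈ B, c w with hWdef
      have hWX : W ≤ X := by
        refine Finset.sum_le_sum_of_subset_of_nonneg ?_ (fun i _ _ => hc0 i)
        intro w hw
        exact Finset.mem_filter.mpr ⟨Finset.mem_univ w, (Finset.mem_filter.mp hw).2⟩
      have hWN2 : W ≤ N / 2 := by linarith
      have hW0 : 0 ≤ W := Finset.sum_nonneg (fun i _ => hc0 i)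
      -- level-closure of B from q
      have hclosed : ∀ w ∈ B, ∀ s : ℕ, s ≤ G.dist q w → ∃ y ∈ B, G.dist q y = s := by
        intro w hw s hs
        obtain ⟨y, hy1, hy2⟩ := dist_mid hG s (G.dist q w - s) q w (by omega)
        have hwR : w ∈ R := hBR hw
        have hdvw : G.dist v w = G.dist q w + 1 := hBd w hw
        have hyv : G.dist v y = s + 1 := by
          have h1 : G.dist v y ≤ G.dist v q + G.dist q y := hG.dist_triangle
          have h2 : G.dist v w ≤ G.dist v y + G.dist y w := hG.dist_triangle
          omega
        have hyR : y ∈ R := by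
          by_contra hyR
          obtain ⟨q', hq'a, hq'z, hq'y⟩ := hI y hyR
          have h1 : G.dist v y ≤ G.dist v q' + G.dist q' y := hG.dist_triangle
          have h3 : G.dist v q' = 1 := SimpleGraph.dist_eq_one_iff_adj.mpr hq'a
          have hq'ys : G.dist q' y = s := by omega
          have h4 : G.dist q' w ≤ G.dist q' y + G.dist y w := hG.dist_triangle
          have h5 := hq'z w hwR
          omega
        refine ⟨y, Finset.mem_filter.mpr ⟨hyR, ?_⟩, hy1⟩
        omega
      -- the heavy-or-not parameter
      set Λ : ℝ := if u₀ ∈ B then L else k with hΛdef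
      have hkΛ : k ≤ Λ := by
        rw [hΛdef]
        split_ifs
        · exact hkL.le
        · exact le_rfl
      have hzB : ∃ z ∈ B, Λ ≤ c z := by
        rw [hΛdef]; split_ifs with h
        · exact ⟨u₀, h, hu₀⟩
        · exact ⟨q, hqB, hck q⟩
      have hpart := part_bound (G := G) c k Λ hk hck hkΛ q B hqB hzB hclosed
      -- branch contribution
      have hBsum : ∑ w ∈ B, c w * (G.dist v w : ℝ)
          = W + ∑ w ∈ B, c w * (G.dist q w : ℝ) := by
        rw [hWdef, ← Finset.sum_add_distrib]
        refine Finset.sum_congr rfl (fun w hw => ?_)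
        rw [hBd w hw]; push_cast; ring
      have hΛval : Λ ^ 2 / (2 * k) - Λ / 2
          = (if u₀ ∈ B then L ^ 2 / (2 * k) - L / 2 else 0) := by
        rw [hΛdef]; split_ifs
        · rfl
        · field_simp; ring
      have hBbound : ∑ w ∈ B, c w * (G.dist v w : ℝ)
          ≤ W * (N / (4 * k) + 1 / 2)
            - (if u₀ ∈ B then L ^ 2 / (2 * k) - L / 2 else 0) := by
        rw [hBsum, ← hΛval]
        have hsq : W ^ 2 / (2 * k) ≤ W * N / (4 * k) := by
          rw [div_le_div_iff₀ (by linarith) (by linarith)]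
          nlinarith [mul_le_mul_of_nonneg_left hWN2 hW0, hk.le, hW0]
        have expand : (W ^ 2 - Λ ^ 2) / (2 * k) - (W - Λ) / 2
            = W ^ 2 / (2 * k) - W / 2 - (Λ ^ 2 / (2 * k) - Λ / 2) := by
          field_simp; ring
        rw [expand] at hpart
        have : W * (N / (4 * k) + 1 / 2) = W * N / (4 * k) + W / 2 := by ring
        linarith
      -- recurse on the rest
      set R' : Finset V := R \ B with hR'def
      have hR'ss : R' ⊂ R := by
        refine Finset.ssubset_iff_of_subset (Finset.sdiff_subset) |>.mpr ?_
        exact ⟨q, hqR, by simp [hR'def, hqB]⟩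
      have hvR' : v ∈ R' := Finset.mem_sdiff.mpr ⟨hvR, hvB⟩
      have hI' : ∀ y, y ∉ R' → ∃ q'', G.Adj v q'' ∧
          (∀ z ∈ R', G.dist v z ≤ G.dist q'' z) ∧ G.dist q'' y < G.dist v y := by
        intro y hy
        by_cases hyB : y ∈ B
        · refine ⟨q, hadj, ?_, (Finset.mem_filter.mp hyB).2⟩
          intro z hz
          have hz2 := Finset.mem_sdiff.mp hz
          have : ¬ (G.dist q z < G.dist v z) := by
            intro hcon
            exact hz2.2 (Finset.mem_filter.mpr ⟨hz2.1, hcon⟩)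
          omega
        · have hyR : y ∉ R := by
            intro hyR
            exact hy (Finset.mem_sdiff.mpr ⟨hyR, hyB⟩)
          obtain ⟨q', h1, h2, h3⟩ := hI y hyR
          exact ⟨q', h1, fun z hz => h2 z (Finset.mem_sdiff.mp hz).1, h3⟩
      have hIH := ih R' hR'ss hvR' hI'
      -- combine
      have hsplitR : ∑ w ∈ R', c w * (G.dist v w : ℝ) + ∑ w ∈ B, c w * (G.dist v w : ℝ)
          = ∑ w ∈ R, c w * (G.dist v w : ℝ) := Finset.sum_sdiff hBR
      have hsplitW : ∑ w ∈ R', c w + W = ∑ w ∈ R, c w := Finset.sum_sdiff hBR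
      have hφ : 0 ≤ L ^ 2 / (2 * k) - L / 2 := by
        rw [sub_nonneg]
        rw [div_le_div_iff₀ (by norm_num) (by linarith)]
        nlinarith
      have hiff : (if u₀ ∈ R ∧ u₀ ≠ v then L ^ 2 / (2 * k) - L / 2 else 0)
          ≤ (if u₀ ∈ B then L ^ 2 / (2 * k) - L / 2 else 0)
            + (if u₀ ∈ R' ∧ u₀ ≠ v then L ^ 2 / (2 * k) - L / 2 else 0) := by
        by_cases h1 : u₀ ∈ R ∧ u₀ ≠ v
        · by_cases h2 : u₀ ∈ B
          · rw [if_pos h1, if_pos h2]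
            have hb : (0:ℝ) ≤ (if u₀ ∈ R' ∧ u₀ ≠ v then L ^ 2 / (2 * k) - L / 2 else 0) := by
              split_ifs
              exacts [hφ, le_rfl]
            linarith
          · have h3 : u₀ ∈ R' ∧ u₀ ≠ v := ⟨Finset.mem_sdiff.mpr ⟨h1.1, h2⟩, h1.2⟩
            rw [if_pos h1, if_neg h2, if_pos h3]
            linarith
        · rw [if_neg h1]
          have ha : (0:ℝ) ≤ (if u₀ ∈ B then L ^ 2 / (2 * k) - L / 2 else 0) := by
            split_ifs
            exacts [hφ, le_rfl]
          have hb : (0:ℝ) ≤ (if u₀ ∈ R' ∧ u₀ ≠ v then L ^ 2 / (2 * k) - L / 2 else 0) := by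
            split_ifs
            exacts [hφ, le_rfl]
          linarith
      have hring : ((∑ w ∈ R', c w) - c v) * (N / (4 * k) + 1 / 2)
          + W * (N / (4 * k) + 1 / 2)
          = (((∑ w ∈ R', c w) + W) - c v) * (N / (4 * k) + 1 / 2) := by ring
      rw [← hsplitR, ← hsplitW]
      linarith [hIH, hBbound]
    · -- no vertex of positive distance: R = {v}
      push_neg at hx
      have hRv : R = {v} := by
        apply Finset.eq_singleton_iff_unique_mem.mpr
        refine ⟨hvR, fun w hw => ?_⟩
        have := hx w hw
        have h0 : G.dist v w = 0 := by omega
        exact ((hG.dist_eq_zero_iff).mp h0).symm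
      subst hRv
      simp [SimpleGraph.dist_self]

end WMBAux

theorem weighted_median_bound_small_L {V : Type*} [Fintype V]
    (G : SimpleGraph V) (hG : G.Connected)
    (k L : ℝ) (hk : 0 < k) (hkL : k < L)
    (c : V → ℝ) (hc : ∀ v, 0 ≤ c v)
    (N : ℝ) (hN : N = ∑ u, c u)
    (hck : ∀ u, k ≤ c u) (hcL : ∃ u, L ≤ c u)
    (hmul : ∃ m : ℤ, N - L = m * k)
    (v : V) (hmed : ∀ u : V, (∑ w, c w * G.dist v w) ≤ ∑ w, c w * G.dist u w)
    (hL : L ≤ N / 2) :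
    (∑ w, c w * G.dist v w) ≤ (N ^ 2 - 2 * L ^ 2) / (4 * k) + (N + L) / 2 := by
  classical
  obtain ⟨u₀, hu₀⟩ := hcL
  have hmain := WMBAux.main_ind hG c k L N hk hkL hck hN v u₀ hu₀ hmed
    Finset.univ (Finset.mem_univ v) (fun y hy => absurd (Finset.mem_univ y) hy)
  have hN0 : 0 ≤ N := by linarith [hkL, hk, hL]
  have hcv : k ≤ c v := hck v
  have hM0 : 0 ≤ N / (4 * k) + 1 / 2 := by positivity
  rw [← hN] at hmain
  by_cases hvu : u₀ = v
  · have : c v = c u₀ := by rw [hvu]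
    have hLcv : L ≤ c v := by rw [← hvu] at *; exact hu₀
    have hif : (if u₀ ∈ Finset.univ ∧ u₀ ≠ v then L ^ 2 / (2 * k) - L / 2 else 0) = 0 :=
      if_neg (by simp [hvu])
    rw [hif, sub_zero] at hmain
    have h1 : (N - c v) * (N / (4 * k) + 1 / 2) ≤ (N - L) * (N / (4 * k) + 1 / 2) := by
      apply mul_le_mul_of_nonneg_right (by linarith) hM0
    have h2 : (N - L) * (N / (4 * k) + 1 / 2) ≤ (N ^ 2 - 2 * L ^ 2) / (4 * k) + (N + L) / 2 := by
      rw [← sub_nonneg]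
      have expand : (N ^ 2 - 2 * L ^ 2) / (4 * k) + (N + L) / 2
          - (N - L) * (N / (4 * k) + 1 / 2) = (L * (N - 2 * L) / (4 * k) + L) := by
        field_simp; ring
      rw [expand]
      have h0 : 0 ≤ L * (N - 2 * L) := by nlinarith
      exact add_nonneg (div_nonneg h0 (by linarith)) (by linarith)
    calc (∑ w, c w * (G.dist v w : ℝ)) ≤ (N - c v) * (N / (4 * k) + 1 / 2) := hmain
    _ ≤ _ := h1.trans h2
  · have hif : (if u₀ ∈ Finset.univ ∧ u₀ ≠ v then L ^ 2 / (2 * k) - L / 2 else 0)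
        = L ^ 2 / (2 * k) - L / 2 := if_pos ⟨Finset.mem_univ u₀, hvu⟩
    rw [hif] at hmain
    have h1 : (N - c v) * (N / (4 * k) + 1 / 2) ≤ (N - k) * (N / (4 * k) + 1 / 2) := by
      apply mul_le_mul_of_nonneg_right (by linarith) hM0
    have h2 : (N - k) * (N / (4 * k) + 1 / 2) - (L ^ 2 / (2 * k) - L / 2)
        ≤ (N ^ 2 - 2 * L ^ 2) / (4 * k) + (N + L) / 2 := by
      rw [← sub_nonneg]
      have expand : (N ^ 2 - 2 * L ^ 2) / (4 * k) + (N + L) / 2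
          - ((N - k) * (N / (4 * k) + 1 / 2) - (L ^ 2 / (2 * k) - L / 2))
          = N / 4 + k / 2 := by
        field_simp; ring
      rw [expand]; positivity
    linarith
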